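/- arXiv:2310.04396 — 2 statements merged into one kernel-verified Lean document; each statement's English description precedes it below -/
import Mathlib

section
/- The family (K_q)_{q ∈ (π/2)·{−1,0,1}^m}, indexed by the 3^m points q of the grid (π/2)·{−1,0,1}^m, is a basis of the real vector space H. -/
open scoped Real BigOperators
open MeasureTheory Filter

noncomputable section

/-- The frequency grid `{-1,0,1}^m`. -/
def Omega (m : ℕ) : Finset (Fin m → ℤ) :=
  Fintype.piFinset fun _ => ({-1, 0, 1} : Finset ℤ)

/-- `ω ⬝ x = Σ_j ω_j x_j`. -/
def dotZ {m : ℕ} (ω : Fin m → ℤ) (x : Fin m → ℝ) : ℝ := ∑ j, (ω j : ℝ) * x j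

/-- The kernel `K(x,z) = (2π)^{-m} Σ_{ω∈{-1,0,1}^m} e^{i ω·(x-z)}` (a real number). -/
def Kker (m : ℕ) (x z : Fin m → ℝ) : ℝ :=
  ((2 * Real.pi) ^ m)⁻¹ *
    (∑ ω ∈ Omega m, Complex.exp (Complex.I * (dotZ ω (x - z) : ℝ))).re

/-- `K_x = K(x, ·)`. -/
def Kfun (m : ℕ) (x : Fin m → ℝ) : (Fin m → ℝ) → ℝ := fun z => Kker m x z

/-- The space `H` of real functions of the form `Σ_{ω∈{-1,0,1}^m} c_ω e^{i ω·z}`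
with `c_{-ω} = conj (c_ω)`. -/
def Hset (m : ℕ) : Set ((Fin m → ℝ) → ℝ) :=
  { g | ∃ c : (Fin m → ℤ) → ℂ,
      (∀ ω, c (-ω) = starRingEnd ℂ (c ω)) ∧
      ∀ z, (g z : ℂ) = ∑ ω ∈ Omega m, c ω * Complex.exp (Complex.I * (dotZ ω z : ℝ)) }

/-- The cube `[-π,π]^m`. -/
def box (m : ℕ) : Set (Fin m → ℝ) := Set.univ.pi fun _ => Set.Icc (-Real.pi) Real.pi

/-- Inner product `⟨g₁,g₂⟩_H = ∫_{[-π,π]^m} g₁ g₂`. -/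
def innerH (m : ℕ) (g₁ g₂ : (Fin m → ℝ) → ℝ) : ℝ := ∫ z in box m, g₁ z * g₂ z

/-- Partial derivative in direction `j`. -/
def partialD {m : ℕ} (j : Fin m) (g : (Fin m → ℝ) → ℝ) : (Fin m → ℝ) → ℝ :=
  fun x => fderiv ℝ g x (Pi.single j 1)

/-- Iterated partial derivative `D^α`. -/
def Dmulti {m : ℕ} (α : Fin m → ℕ) (g : (Fin m → ℝ) → ℝ) : (Fin m → ℝ) → ℝ :=
  (List.finRange m).foldr (fun j h => (partialD j)^[α j] h) g

/-- The index set `{-1,1}^{|α|}`, with entries indexed as `𝔦_{j,k}`, `j : Fin m`, `k : Fin (α j)`. -/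
def ShiftSet {m : ℕ} (α : Fin m → ℕ) : Finset (∀ j : Fin m, Fin (α j) → ℤ) :=
  Fintype.piFinset fun j => Fintype.piFinset fun _ => ({-1, 1} : Finset ℤ)

/-- The product `𝔦^{(1,…,1)}` of all entries of `𝔦`. -/
def signProd {m : ℕ} (α : Fin m → ℕ) (ε : ∀ j : Fin m, Fin (α j) → ℤ) : ℝ :=
  ∏ j, ∏ k, ((ε j k : ℤ) : ℝ)

/-- The shifted point `p_{α,𝔦}`, with `j`-th coordinate `(π/2)·((Σ_k 𝔦_{j,k}) mod 4)`,
the representative mod 4 taken in `{0,1,2,3}`. -/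
def pshift {m : ℕ} (α : Fin m → ℕ) (ε : ∀ j : Fin m, Fin (α j) → ℤ) : Fin m → ℝ :=
  fun j => (Real.pi / 2) * (((∑ k, ε j k) % 4 : ℤ) : ℝ)

/-- The point of the grid `(π/2)·{-1,0,1}^m` coded by `s : Fin m → Fin 3`. -/
def pt3 (m : ℕ) (s : Fin m → Fin 3) : Fin m → ℝ :=
  fun j => (Real.pi / 2) * (((s j : ℕ) : ℝ) - 1)

/-- The point of the grid `(π/2)·{0,1,2,3}^m` coded by `s : Fin m → Fin 4`. -/
def pt4 (m : ℕ) (s : Fin m → Fin 4) : Fin m → ℝ :=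
  fun j => (Real.pi / 2) * ((s j : ℕ) : ℝ)

/-- The grid `(π/2)·{-1,0,1}^m ⊆ ℝ^m`. -/
def grid3 (m : ℕ) : Set (Fin m → ℝ) := Set.range (pt3 m)

/-- The grid `(π/2)·{0,1,2,3}^m ⊆ ℝ^m`. -/
def grid4 (m : ℕ) : Set (Fin m → ℝ) := Set.range (pt4 m)

/-- `I_d`: points of `ℝ^m` with at most `d` nonzero coordinates. -/
def Iset (m d : ℕ) : Set (Fin m → ℝ) := { z | Set.ncard { j : Fin m | z j ≠ 0 } ≤ d }

/-- Multiindices `α ∈ (ℤ_{≥0})^m` with `|α| ≤ L`, as a finset. -/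
def multiIdx (m L : ℕ) : Finset (Fin m → ℕ) :=
  (Fintype.piFinset fun _ : Fin m => Finset.range (L + 1)).filter fun α => ∑ j, α j ≤ L

/-- The sup norm `‖g‖_∞ = sup_z |g(z)|`. -/
def supNorm (m : ℕ) (g : (Fin m → ℝ) → ℝ) : ℝ := ⨆ z : Fin m → ℝ, |g z|

/-- The norm `‖g‖_H = √⟨g,g⟩_H`. -/
def normH (m : ℕ) (g : (Fin m → ℝ) → ℝ) : ℝ := Real.sqrt (innerH m g g)

end

noncomputable section
open Complex Finset

lemma two_cos_real (x : ℝ) : Complex.exp (Complex.I * x) + Complex.exp (Complex.I * (-x)) =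
    2 * (Real.cos x : ℂ) := by
  rw [Complex.ofReal_cos, Complex.two_cos]
  ring_nf

lemma sum_exp_omega (m : ℕ) (w : Fin m → ℝ) :
    ∑ ω ∈ Omega m, Complex.exp (Complex.I * (dotZ ω w : ℝ)) =
      ∏ j, ((1 + 2 * Real.cos (w j) : ℝ) : ℂ) := by
  have h1 : ∀ ω : Fin m → ℤ, Complex.exp (Complex.I * (dotZ ω w : ℝ)) =
      ∏ j, Complex.exp (Complex.I * ((ω j : ℝ) * (w j) : ℝ)) := by
    intro ω
    rw [dotZ, Complex.ofReal_sum, Finset.mul_sum, Complex.exp_sum]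
  rw [Omega, Finset.sum_congr rfl fun ω _ => h1 ω,
    ← Finset.prod_univ_sum (fun _ : Fin m => ({-1, 0, 1} : Finset ℤ))
      (fun j a => Complex.exp (Complex.I * ((a : ℝ) * (w j) : ℝ)))]
  refine Finset.prod_congr rfl fun j _ => ?_
  have h2 : ∑ a ∈ ({-1, 0, 1} : Finset ℤ), Complex.exp (Complex.I * ((a : ℝ) * w j : ℝ)) =
      Complex.exp (Complex.I * (((-1:ℤ) : ℝ) * w j : ℝ)) +
        Complex.exp (Complex.I * (((0:ℤ) : ℝ) * w j : ℝ)) +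
        Complex.exp (Complex.I * (((1:ℤ) : ℝ) * w j : ℝ)) := by
    rw [show ({-1, 0, 1} : Finset ℤ) = {-1, 0, 1} from rfl]
    rw [Finset.sum_insert (by decide), Finset.sum_insert (by decide), Finset.sum_singleton]
    ring
  rw [h2]
  push_cast
  have h3 := two_cos_real (w j)
  rw [show Complex.I * (-1 * (w j:ℂ)) = Complex.I * (-(w j:ℂ)) by ring,
    show Complex.I * (1 * (w j:ℂ)) = Complex.I * (w j:ℂ) by ring,
    show Complex.I * (0 * (w j:ℂ)) = 0 by ring, Complex.exp_zero]
  rw [show Complex.cos (w j : ℂ) = ((Real.cos (w j) : ℝ) : ℂ) from (Complex.ofReal_cos _).symm,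
    ← h3]
  ring

lemma Kker_prod (m : ℕ) (x z : Fin m → ℝ) :
    Kker m x z = ((2 * Real.pi) ^ m)⁻¹ * ∏ j, (1 + 2 * Real.cos (x j - z j)) := by
  rw [Kker, sum_exp_omega]
  congr 1
  simp only [Pi.sub_apply]
  rw [← Complex.ofReal_prod, Complex.ofReal_re]

/-- The three one-dimensional kernel factors at grid points `-π/2, 0, π/2`. -/
def Fb : Fin 3 → ℝ → ℝ :=
  ![fun x => 1 - 2 * Real.sin x, fun x => 1 + 2 * Real.cos x, fun x => 1 + 2 * Real.sin x]

lemma Fb_eq (s : Fin 3) (z : ℝ) :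
    1 + 2 * Real.cos ((Real.pi / 2) * (((s : ℕ) : ℝ) - 1) - z) = Fb s z := by
  fin_cases s <;> simp [Fb]
  · rw [show -(Real.pi / 2) - z = -(Real.pi / 2 + z) by ring,
      Real.cos_neg, Real.cos_add, Real.cos_pi_div_two, Real.sin_pi_div_two]
    ring
  · rw [show Real.pi / 2 * (2 - 1) - z = Real.pi / 2 - z by ring, Real.cos_pi_div_two_sub]

lemma Kfun_pt3 (m : ℕ) (s : Fin m → Fin 3) (z : Fin m → ℝ) :
    Kfun m (pt3 m s) z = ((2 * Real.pi) ^ m)⁻¹ * ∏ j, Fb (s j) (z j) := by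
  rw [Kfun, Kker_prod]
  congr 1
  exact Finset.prod_congr rfl fun j _ => Fb_eq (s j) (z j)

/-- Values of `Fb s` at the points `0, π/2, π`. -/
def Mmat : Fin 3 → Fin 3 → ℝ := ![![1,-1,1],![3,1,-1],![1,3,1]]

/-- Right inverse of `Mmat`. -/
def MmatInv : Fin 3 → Fin 3 → ℝ := ![![1/4,1/4,0],![-1/4,0,1/4],![1/2,-1/4,1/4]]

lemma Mmat_mul_inv (a c : Fin 3) : ∑ b, Mmat a b * MmatInv b c = if a = c then 1 else 0 := by
  fin_cases a <;> fin_cases c <;>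
    simp [Mmat, MmatInv, Fin.sum_univ_three, Matrix.cons_val_zero, Matrix.cons_val_one,
      Matrix.head_cons, Matrix.vecHead, Matrix.vecTail] <;> norm_num

lemma Fb_eval (s t : Fin 3) : Fb s ((Real.pi / 2) * ((t : ℕ) : ℝ)) = Mmat s t := by
  have h2s : Real.sin (Real.pi / 2 * 2) = 0 := by
    rw [show Real.pi / 2 * 2 = Real.pi by ring]; exact Real.sin_pi
  have h2c : Real.cos (Real.pi / 2 * 2) = -1 := by
    rw [show Real.pi / 2 * 2 = Real.pi by ring]; exact Real.cos_pi
  fin_cases s <;> fin_cases t <;>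
    norm_num [Fb, Mmat, h2s, h2c, Real.sin_pi_div_two, Real.cos_pi_div_two,
      Matrix.cons_val_zero, Matrix.cons_val_one, Matrix.head_cons, Matrix.vecHead, Matrix.vecTail]

lemma kron_delta {κ : Type*} [Fintype κ] [DecidableEq κ] {R : Type*} [CommRing R]
    (M N : κ → κ → R) (h : ∀ a c, ∑ b, M a b * N b c = if a = c then 1 else 0)
    (m : ℕ) (s u : Fin m → κ) :
    ∑ t : Fin m → κ, (∏ j, M (s j) (t j)) * (∏ j, N (t j) (u j)) =
      if s = u then 1 else 0 := by
  have h1 : ∀ t : Fin m → κ, (∏ j, M (s j) (t j)) * (∏ j, N (t j) (u j)) =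
      ∏ j, (M (s j) (t j) * N (t j) (u j)) := fun t => (Finset.prod_mul_distrib).symm
  rw [Finset.sum_congr rfl fun t _ => h1 t, ← Fintype.piFinset_univ,
    ← Finset.prod_univ_sum (fun _ : Fin m => (Finset.univ : Finset κ))
      (fun j b => M (s j) b * N b (u j))]
  rw [Finset.prod_congr rfl fun j (_ : j ∈ Finset.univ) => h (s j) (u j)]
  by_cases hsu : s = u
  · subst hsu; simp
  · rw [if_neg hsu]
    obtain ⟨j, hj⟩ : ∃ j, s j ≠ u j := by
      by_contra hc; push_neg at hc; exact hsu (funext hc)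
    exact Finset.prod_eq_zero (Finset.mem_univ j) (if_neg hj)

lemma K_indep (m : ℕ) :
    LinearIndependent ℝ (fun s : Fin m → Fin 3 => Kfun m (pt3 m s)) := by
  rw [Fintype.linearIndependent_iff]
  intro g hg u
  have hpi : ((2 * Real.pi) ^ m)⁻¹ ≠ 0 := by
    positivity
  have hev : ∀ t : Fin m → Fin 3,
      ∑ s : Fin m → Fin 3, g s * ∏ j, Mmat (s j) (t j) = 0 := by
    intro t
    have h0 := congrFun hg (fun j => (Real.pi / 2) * ((t j : ℕ) : ℝ))
    simp only [Finset.sum_apply, Pi.smul_apply, smul_eq_mul, Pi.zero_apply] at h0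
    have h1 : ∀ s : Fin m → Fin 3,
        g s * Kfun m (pt3 m s) (fun j => (Real.pi / 2) * ((t j : ℕ) : ℝ)) =
          ((2 * Real.pi) ^ m)⁻¹ * (g s * ∏ j, Mmat (s j) (t j)) := by
      intro s
      rw [Kfun_pt3, Finset.prod_congr rfl fun j _ => Fb_eval (s j) (t j)]
      ring
    rw [Finset.sum_congr rfl fun s _ => h1 s, ← Finset.mul_sum] at h0
    rcases mul_eq_zero.mp h0 with h | h
    · exact absurd h hpi
    · exact h
  have key : ∀ s : Fin m → Fin 3,
      ∑ t : Fin m → Fin 3, (∏ j, Mmat (s j) (t j)) * ∏ j, MmatInv (t j) (u j) =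
        if s = u then 1 else 0 := fun s => kron_delta Mmat MmatInv Mmat_mul_inv m s u
  have : g u = ∑ s : Fin m → Fin 3, g s * if s = u then 1 else 0 := by
    simp
  rw [this, Finset.sum_congr rfl fun s _ => by rw [← key s, Finset.mul_sum]]
  rw [Finset.sum_comm]
  have : ∀ t : Fin m → Fin 3,
      ∑ s : Fin m → Fin 3, g s * ((∏ j, Mmat (s j) (t j)) * ∏ j, MmatInv (t j) (u j)) =
        (∑ s : Fin m → Fin 3, g s * ∏ j, Mmat (s j) (t j)) * ∏ j, MmatInv (t j) (u j) := by
    intro t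
    rw [Finset.sum_mul]
    exact Finset.sum_congr rfl fun s _ => by ring
  rw [Finset.sum_congr rfl fun t _ => this t]
  simp [hev]

lemma exp_dot {m : ℕ} (ω : Fin m → ℤ) (w : Fin m → ℝ) :
    Complex.exp (Complex.I * (dotZ ω w : ℝ)) =
      ∏ j, Complex.exp (Complex.I * ((ω j : ℝ) * (w j) : ℝ)) := by
  rw [dotZ, Complex.ofReal_sum, Finset.mul_sum, Complex.exp_sum]

lemma dotZ_neg {m : ℕ} (ω : Fin m → ℤ) (x : Fin m → ℝ) : dotZ (-ω) x = -dotZ ω x := by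
  rw [dotZ, dotZ, ← Finset.sum_neg_distrib]
  exact Finset.sum_congr rfl fun j _ => by push_cast [Pi.neg_apply]; ring

lemma dotZ_sub {m : ℕ} (ω : Fin m → ℤ) (x z : Fin m → ℝ) :
    dotZ ω (x - z) = dotZ ω x - dotZ ω z := by
  rw [dotZ, dotZ, dotZ, ← Finset.sum_sub_distrib]
  exact Finset.sum_congr rfl fun j _ => by rw [Pi.sub_apply]; ring

lemma neg_mem_Omega {m : ℕ} {ω : Fin m → ℤ} (h : ω ∈ Omega m) : -ω ∈ Omega m := by
  rw [Omega, Fintype.mem_piFinset] at h ⊢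
  intro j
  have hj := h j
  simp only [Finset.mem_insert, Finset.mem_singleton, Pi.neg_apply] at hj ⊢
  omega

/-- Every `Kfun m x` lies in `Hset m`. -/
lemma Kfun_mem_Hset (m : ℕ) (x : Fin m → ℝ) : Kfun m x ∈ Hset m := by
  refine ⟨fun ω => (((2 * Real.pi) ^ m)⁻¹ : ℝ) * Complex.exp (-(Complex.I * (dotZ ω x : ℝ))),
    fun ω => ?_, fun z => ?_⟩
  · dsimp only
    rw [dotZ_neg, map_mul, Complex.conj_ofReal, ← Complex.exp_conj, map_neg, map_mul,
      Complex.conj_I, Complex.conj_ofReal]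
    push_cast
    ring_nf
  · have hsym : ∀ j : Fin m, x j - z j = -(z j - x j) := fun j => by ring
    have : Kfun m x z = ((2 * Real.pi) ^ m)⁻¹ * ∏ j, (1 + 2 * Real.cos (z j - x j)) := by
      rw [Kfun, Kker_prod]
      congr 1
      exact Finset.prod_congr rfl fun j _ => by rw [hsym j, Real.cos_neg]
    rw [this, Complex.ofReal_mul, Complex.ofReal_prod]
    have hpr : ∀ j : Fin m, ((1 + 2 * Real.cos (z j - x j) : ℝ) : ℂ) =
        ((1 + 2 * Real.cos ((z - x) j) : ℝ) : ℂ) := fun j => by rw [Pi.sub_apply]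
    rw [Finset.prod_congr rfl fun j _ => hpr j, ← sum_exp_omega m (z - x), Finset.mul_sum]
    refine Finset.sum_congr rfl fun ω _ => ?_
    dsimp only
    rw [mul_assoc, ← Complex.exp_add]
    push_cast
    congr 2
    rw [dotZ_sub]
    push_cast
    ring

/-- `Hset m` as a submodule. -/
def Hsub (m : ℕ) : Submodule ℝ ((Fin m → ℝ) → ℝ) where
  carrier := Hset m
  zero_mem' := ⟨0, by simp, by simp⟩
  add_mem' := by
    rintro g g' ⟨c, hc, hg⟩ ⟨c', hc', hg'⟩
    refine ⟨fun ω => c ω + c' ω, fun ω => by dsimp only; rw [hc, hc', map_add], fun z => ?_⟩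
    have : ((g + g') z : ℂ) = (g z : ℂ) + (g' z : ℂ) := by push_cast [Pi.add_apply]; ring
    rw [this, hg z, hg' z, ← Finset.sum_add_distrib]
    exact Finset.sum_congr rfl fun ω _ => by ring
  smul_mem' := by
    rintro r g ⟨c, hc, hg⟩
    refine ⟨fun ω => (r : ℂ) * c ω, fun ω => by
      dsimp only; rw [hc, map_mul, Complex.conj_ofReal], fun z => ?_⟩
    have : ((r • g) z : ℂ) = (r : ℂ) * (g z : ℂ) := by push_cast [Pi.smul_apply, smul_eq_mul]; ring
    rw [this, hg z, Finset.mul_sum]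
    exact Finset.sum_congr rfl fun ω _ => by ring

/-- The one-dimensional building blocks `1, cos, sin`. -/
def bfun : Fin 3 → ℝ → ℝ := ![fun _ => 1, Real.cos, Real.sin]

/-- Products of `1, cos, sin`. -/
def Bfun (m : ℕ) (t : Fin m → Fin 3) : (Fin m → ℝ) → ℝ := fun z => ∏ j, bfun (t j) (z j)

/-- Coefficients expressing `bfun` in terms of `Fb`. -/
def Amat : Fin 3 → Fin 3 → ℝ := ![![1/2,0,1/2],![-1/4,1/2,-1/4],![-1/4,0,1/4]]

lemma bfun_comb (t : Fin 3) (x : ℝ) : bfun t x = ∑ s, Amat t s * Fb s x := by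
  fin_cases t <;>
    simp [bfun, Amat, Fb, Fin.sum_univ_three, Matrix.cons_val_zero, Matrix.cons_val_one,
      Matrix.head_cons, Matrix.vecHead, Matrix.vecTail] <;> ring

lemma B_in_span (m : ℕ) (t : Fin m → Fin 3) :
    Bfun m t ∈ Submodule.span ℝ (Set.range fun s : Fin m → Fin 3 => Kfun m (pt3 m s)) := by
  have hpi : (2 * Real.pi) ^ m ≠ 0 := by positivity
  have hfun : Bfun m t = ∑ s : Fin m → Fin 3,
      ((2 * Real.pi) ^ m * ∏ j, Amat (t j) (s j)) • Kfun m (pt3 m s) := by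
    funext z
    rw [Finset.sum_apply]
    have h1 : ∀ s : Fin m → Fin 3,
        (((2 * Real.pi) ^ m * ∏ j, Amat (t j) (s j)) • Kfun m (pt3 m s)) z =
          (∏ j, Amat (t j) (s j)) * ∏ j, Fb (s j) (z j) := by
      intro s
      rw [Pi.smul_apply, smul_eq_mul, Kfun_pt3]
      field_simp
    rw [Finset.sum_congr rfl fun s _ => h1 s]
    have h2 : ∀ s : Fin m → Fin 3,
        (∏ j, Amat (t j) (s j)) * ∏ j, Fb (s j) (z j) =
          ∏ j, (Amat (t j) (s j) * Fb (s j) (z j)) := fun s => (Finset.prod_mul_distrib).symm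
    rw [Finset.sum_congr rfl fun s _ => h2 s, ← Fintype.piFinset_univ,
      ← Finset.prod_univ_sum (fun _ : Fin m => (Finset.univ : Finset (Fin 3)))
        (fun j b => Amat (t j) b * Fb b (z j))]
    rw [Bfun]
    exact Finset.prod_congr rfl fun j _ => bfun_comb (t j) (z j)
  rw [hfun]
  exact Submodule.sum_mem _ fun s _ => Submodule.smul_mem _ _
    (Submodule.subset_span ⟨s, rfl⟩)

/-- Coefficients expressing `exp (I ω x)` in terms of `1, cos, sin`, for `ω ∈ {-1,0,1}`. -/
def Wc : ℤ → Fin 3 → ℂ := fun ω =>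
  if ω = 0 then ![1, 0, 0] else if ω = 1 then ![0, 1, Complex.I] else ![0, 1, -Complex.I]

lemma exp_comb {ω : ℤ} (hω : ω ∈ ({-1, 0, 1} : Finset ℤ)) (x : ℝ) :
    Complex.exp (Complex.I * ((ω : ℝ) * x : ℝ)) = ∑ t, Wc ω t * (bfun t x : ℝ) := by
  simp only [Finset.mem_insert, Finset.mem_singleton] at hω
  have key : ∀ y : ℝ, Complex.exp (Complex.I * (y : ℝ)) =
      (Real.cos y : ℝ) + (Real.sin y : ℝ) * Complex.I := by
    intro y
    rw [mul_comm, Complex.exp_mul_I, Complex.ofReal_cos, Complex.ofReal_sin]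
  rcases hω with h | h | h <;> subst h <;>
    simp only [Wc, bfun, Fin.sum_univ_three, Matrix.cons_val_zero, Matrix.cons_val_one,
      Matrix.cons_val_two, Matrix.tail_cons,
      Matrix.head_cons, Matrix.vecHead, Matrix.vecTail] <;>
    norm_num [Matrix.cons_val_two, Matrix.tail_cons, Matrix.head_cons]
  · rw [show -(Complex.I * (x : ℂ)) = (-(x : ℂ)) * Complex.I by ring, Complex.exp_mul_I,
      Complex.cos_neg, Complex.sin_neg]
    ring
  · rw [mul_comm, Complex.exp_mul_I]
    ring

lemma conj_Wc {ω : ℤ} (hω : ω ∈ ({-1, 0, 1} : Finset ℤ)) (t : Fin 3) :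
    starRingEnd ℂ (Wc ω t) = Wc (-ω) t := by
  simp only [Finset.mem_insert, Finset.mem_singleton] at hω
  rcases hω with h | h | h <;> subst h <;> fin_cases t <;>
    simp [Wc, Matrix.cons_val_zero, Matrix.cons_val_one, Matrix.head_cons,
      Matrix.vecHead, Matrix.vecTail]

lemma Hset_subset_span (m : ℕ) {g : (Fin m → ℝ) → ℝ} (hgH : g ∈ Hset m) :
    g ∈ Submodule.span ℝ (Set.range fun s : Fin m → Fin 3 => Kfun m (pt3 m s)) := by
  obtain ⟨c, hc, hg⟩ := hgH
  set d : (Fin m → Fin 3) → ℂ := fun t => ∑ ω ∈ Omega m, c ω * ∏ j, Wc (ω j) (t j) with hd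
  have homega : ∀ {ω : Fin m → ℤ}, ω ∈ Omega m → ∀ j, ω j ∈ ({-1,0,1} : Finset ℤ) := by
    intro ω hω j
    rw [Omega, Fintype.mem_piFinset] at hω
    exact hω j
  -- complex expansion of g in terms of Bfun
  have hexp : ∀ z, (g z : ℂ) = ∑ t : Fin m → Fin 3, d t * (Bfun m t z : ℝ) := by
    intro z
    rw [hg z]
    have h1 : ∀ ω ∈ Omega m, c ω * Complex.exp (Complex.I * (dotZ ω z : ℝ)) =
        ∑ t : Fin m → Fin 3, c ω * ((∏ j, Wc (ω j) (t j)) * (Bfun m t z : ℝ)) := by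
      intro ω hω
      rw [exp_dot, Finset.prod_congr rfl fun j _ => exp_comb (homega hω j) (z j),
        Finset.prod_univ_sum (fun _ : Fin m => (Finset.univ : Finset (Fin 3)))
          (fun j t => Wc (ω j) t * ((bfun t (z j) : ℝ) : ℂ)),
        Fintype.piFinset_univ, Finset.mul_sum]
      refine Finset.sum_congr rfl fun t _ => ?_
      rw [Finset.prod_mul_distrib, Bfun, Complex.ofReal_prod]
    rw [Finset.sum_congr rfl h1, Finset.sum_comm]
    refine Finset.sum_congr rfl fun t _ => ?_
    rw [hd]
    dsimp only
    rw [Finset.sum_mul]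
    exact Finset.sum_congr rfl fun ω _ => by ring
  -- d is real
  have hreal : ∀ t, ((d t).re : ℂ) = d t := by
    intro t
    rw [← Complex.conj_eq_iff_re, hd]
    dsimp only
    rw [map_sum]
    rw [show (∑ ω ∈ Omega m, starRingEnd ℂ (c ω * ∏ j, Wc (ω j) (t j))) =
        ∑ ω ∈ Omega m, c (-ω) * ∏ j, Wc ((-ω) j) (t j) from
      Finset.sum_congr rfl fun ω hω => by
        rw [map_mul, map_prod, ← hc ω,
          Finset.prod_congr rfl fun j _ => conj_Wc (homega hω j) (t j)]
        rfl]
    refine Finset.sum_nbij' (fun ω => -ω) (fun ω => -ω) (fun ω hω => neg_mem_Omega hω)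
      (fun ω hω => neg_mem_Omega hω) (fun ω _ => by simp) (fun ω _ => by simp) ?_
    intro ω hω
    simp
  -- conclude
  have hfun : g = ∑ t : Fin m → Fin 3, (d t).re • Bfun m t := by
    funext z
    apply Complex.ofReal_injective
    rw [hexp z]
    rw [show ((∑ t : Fin m → Fin 3, (d t).re • Bfun m t) z : ℝ) =
        ∑ t : Fin m → Fin 3, (d t).re * Bfun m t z from by
      rw [Finset.sum_apply]; exact Finset.sum_congr rfl fun t _ => rfl]
    push_cast
    exact (Finset.sum_congr rfl fun t _ => by rw [hreal t]).symm
  rw [hfun]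
  exact Submodule.sum_mem _ fun t _ => Submodule.smul_mem _ _ (B_in_span m t)

end

/-- the family `(K_q)_{q ∈ (π/2)·{-1,0,1}^m}` (indexed by the `3^m` grid
points) is a basis of `H`: it is linearly independent and spans `H`. -/
theorem Kgrid3_basis_of_H (m : ℕ) (hm : 0 < m) :
    LinearIndependent ℝ (fun s : Fin m → Fin 3 => Kfun m (pt3 m s)) ∧
      (Submodule.span ℝ (Set.range fun s : Fin m → Fin 3 => Kfun m (pt3 m s)) :
        Set ((Fin m → ℝ) → ℝ)) = Hset m := by
  refine ⟨K_indep m, Set.Subset.antisymm ?_ ?_⟩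
  · intro g hg
    have hle : Submodule.span ℝ (Set.range fun s : Fin m → Fin 3 => Kfun m (pt3 m s)) ≤
        Hsub m :=
      Submodule.span_le.mpr (by rintro _ ⟨s, rfl⟩; exact Kfun_mem_Hset m (pt3 m s))
    exact hle hg
  · intro g hg
    exact Hset_subset_span m hg
end

section
/- Let p₁, …, p_D be pairwise distinct points of the grid (π/2)·{−1,0,1}^m. Then the Gram matrix (K(p_i, p_j))_{1≤i,j≤D} ∈ ℝ^{D×D} is invertible; in particular, for any right-hand side (y₁,…,y_D)ᵀ ∈ ℝ^D, the linear system (K(p_i, p_j))_{1≤i,j≤D} · η = (y₁,…,y_D)ᵀ has a unique solution η ∈ ℝ^D. -/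
open scoped Real BigOperators
open MeasureTheory Filter

noncomputable section AuxGram
open scoped Kronecker

/-- Feature matrix for one coordinate. -/
def Bmat : Matrix (Fin 3) (Fin 3) ℝ :=
  !![1,1,1; 0, Real.sqrt 2, 0; -Real.sqrt 2, 0, Real.sqrt 2]

lemma Bmat_det_ne : Bmat.det ≠ 0 := by
  simp [Bmat, Matrix.det_fin_three]

lemma Bsum (a b : Fin 3) :
    ∑ c, Bmat c a * Bmat c b
      = 1 + 2 * Real.cos ((Real.pi/2) * (((a:ℕ):ℝ) - ((b:ℕ):ℝ))) := by
  have h2 : Real.sqrt 2 * Real.sqrt 2 = 2 := Real.mul_self_sqrt (by norm_num)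
  fin_cases a <;> fin_cases b <;>
    simp [Bmat, Fin.sum_univ_three] <;>
    norm_num [Real.cos_pi_div_two, Real.cos_pi, mul_comm] <;>
    nlinarith [h2]

/-- The m-fold Kronecker power of `Bmat`. -/
def Wmat (m : ℕ) : Matrix (Fin m → Fin 3) (Fin m → Fin 3) ℝ :=
  Matrix.of fun w s => ∏ k, Bmat (w k) (s k)

lemma Wmat_det_ne (m : ℕ) : (Wmat m).det ≠ 0 := by
  induction m with
  | zero =>
      have : Wmat 0 = 1 := by
        ext w s
        simp [Wmat, Matrix.one_apply, Subsingleton.elim w s]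
      rw [this, Matrix.det_one]; norm_num
  | succ m ih =>
      have hW : Wmat (m+1)
          = ((Bmat ⊗ₖ Wmat m).submatrix (Fin.consEquiv fun _ : Fin (m+1) => Fin 3).symm (Fin.consEquiv fun _ : Fin (m+1) => Fin 3).symm) := by
        ext w s
        simp [Wmat, Matrix.kroneckerMap_apply, Fin.consEquiv, Fin.prod_univ_succ, Fin.tail]
      rw [hW, Matrix.det_submatrix_equiv_self, Matrix.det_kronecker]
      exact mul_ne_zero (pow_ne_zero _ Bmat_det_ne) (pow_ne_zero _ ih)

lemma sum_exp_eq (m : ℕ) (t : Fin m → ℝ) :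
    (∑ ω ∈ Omega m, Complex.exp (Complex.I * (dotZ ω t : ℝ)))
      = ((∏ j, (1 + 2 * Real.cos (t j)) : ℝ) : ℂ) := by
  have h1 : ∀ ω : Fin m → ℤ, Complex.exp (Complex.I * (dotZ ω t : ℝ))
      = ∏ j, Complex.exp (Complex.I * (ω j : ℂ) * (t j : ℂ)) := by
    intro ω
    rw [← Complex.exp_sum]
    congr 1
    simp only [dotZ]
    push_cast
    rw [Finset.mul_sum]
    exact Finset.sum_congr rfl fun j _ => by ring
  simp_rw [h1]
  have h2 := Finset.prod_univ_sum (fun _ : Fin m => ({-1,0,1} : Finset ℤ))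
    (fun j s => Complex.exp (Complex.I * (s:ℂ) * (t j:ℂ)))
  rw [Omega, ← h2, Complex.ofReal_prod]
  refine Finset.prod_congr rfl fun j _ => ?_
  have h3 : ({-1, 0, 1} : Finset ℤ).sum (fun s => Complex.exp (Complex.I * (s : ℂ) * (t j : ℂ)))
      = Complex.exp (Complex.I * (-1) * t j) + Complex.exp (Complex.I * 0 * t j)
        + Complex.exp (Complex.I * 1 * t j) := by
    rw [Finset.sum_insert (by norm_num), Finset.sum_insert (by norm_num), Finset.sum_singleton]
    push_cast
    ring_nf
  rw [h3]
  push_cast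
  rw [Complex.cos]
  rw [show Complex.I * 0 * (t j : ℂ) = 0 by ring, Complex.exp_zero]
  rw [show Complex.I * (-1) * (t j:ℂ) = -((t j:ℂ) * Complex.I) by ring,
      show Complex.I * 1 * (t j:ℂ) = (t j:ℂ) * Complex.I by ring]
  ring

lemma gram_entry (m : ℕ) (a b : Fin m → Fin 3) :
    Kker m (pt3 m a) (pt3 m b)
      = ((2*Real.pi)^m)⁻¹ * ∏ k, ∑ c, Bmat c (a k) * Bmat c (b k) := by
  rw [Kker, sum_exp_eq, Complex.ofReal_re]
  congr 1
  refine Finset.prod_congr rfl fun k _ => ?_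
  rw [Bsum]
  congr 2
  simp only [Pi.sub_apply, pt3]
  ring

end AuxGram

open Matrix in
/-- for pairwise distinct grid points `p₁,…,p_D ∈ (π/2)·{-1,0,1}^m`,
the Gram matrix `(K(p_i,p_j))` is invertible; in particular each linear system
`(K(p_i,p_j))·η = y` has a unique solution. -/
theorem gram_matrix_invertible (m : ℕ) (hm : 0 < m) (D : ℕ) (hD : 1 ≤ D)
    (p : Fin D → (Fin m → ℝ)) (hp : ∀ i, p i ∈ grid3 m) (hinj : Function.Injective p) :
    IsUnit (Matrix.of fun i j => Kker m (p i) (p j)) ∧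
      ∀ y : Fin D → ℝ, ∃! η : Fin D → ℝ,
        (Matrix.of fun i j => Kker m (p i) (p j)).mulVec η = y := by
  classical
  have hπ : (0:ℝ) < 2 * Real.pi := by positivity
  set c : ℝ := ((2*Real.pi)^m)⁻¹ with hc
  have hcpos : 0 < c := by positivity
  choose σ hσ using hp
  have hσinj : Function.Injective σ := fun i i' h => hinj (by rw [← hσ i, ← hσ i', h])
  set G : Matrix (Fin D) (Fin D) ℝ := Matrix.of fun i j => Kker m (p i) (p j) with hG
  set A : Matrix (Fin m → Fin 3) (Fin D) ℝ := Matrix.of fun w i => Wmat m w (σ i) with hA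
  have hGram : G = c • (Aᵀ * A) := by
    ext i j
    have h1 : Kker m (p i) (p j)
        = c * ∏ k, ∑ cc, Bmat cc (σ i k) * Bmat cc (σ j k) := by
      rw [← hσ i, ← hσ j]; exact gram_entry m (σ i) (σ j)
    have h2 : (Aᵀ * A) i j = ∏ k, ∑ cc, Bmat cc (σ i k) * Bmat cc (σ j k) := by
      have h3 : (Aᵀ * A) i j
          = ∑ w : Fin m → Fin 3, ∏ k, (Bmat (w k) (σ i k) * Bmat (w k) (σ j k)) := by
        simp only [Matrix.mul_apply, Matrix.transpose_apply, hA, Matrix.of_apply, Wmat,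
          ← Finset.prod_mul_distrib]
      rw [h3]
      have h4 := Finset.prod_univ_sum (fun _ : Fin m => (Finset.univ : Finset (Fin 3)))
        (fun k cc => Bmat cc (σ i k) * Bmat cc (σ j k))
      rw [Fintype.piFinset_univ] at h4
      exact h4.symm
    simp [hG, h1, h2, Matrix.smul_apply, smul_eq_mul]
  -- injectivity of G.mulVec
  have hker : ∀ v : Fin D → ℝ, G.mulVec v = 0 → v = 0 := by
    intro v hv
    set u : (Fin m → Fin 3) → ℝ := A.mulVec v with hu
    have hdot : c * (u ⬝ᵥ u) = 0 := by
      have : v ⬝ᵥ G.mulVec v = 0 := by rw [hv, dotProduct_zero]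
      rw [hGram, Matrix.smul_mulVec, dotProduct_smul, ← Matrix.mulVec_mulVec,
        Matrix.dotProduct_mulVec, Matrix.vecMul_transpose, smul_eq_mul, ← hu] at this
      exact this
    have huu : u ⬝ᵥ u = 0 := by
      rcases mul_eq_zero.mp hdot with h | h
      · exact absurd h (ne_of_gt hcpos)
      · exact h
    have hu0 : u = 0 := by
      funext w
      have hnn : ∀ w ∈ (Finset.univ : Finset (Fin m → Fin 3)), 0 ≤ u w * u w :=
        fun w _ => mul_self_nonneg _
      have := (Finset.sum_eq_zero_iff_of_nonneg hnn).mp huu w (Finset.mem_univ w)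
      exact mul_self_eq_zero.mp this
    -- transfer to Wmat
    set vt : (Fin m → Fin 3) → ℝ := fun t => ∑ i, if σ i = t then v i else 0 with hvt
    have hWv : (Wmat m).mulVec vt = u := by
      funext w
      rw [hu]
      simp only [Matrix.mulVec, dotProduct, hvt, Finset.mul_sum, mul_ite, mul_zero]
      rw [Finset.sum_comm]
      refine Finset.sum_congr rfl fun i _ => ?_
      rw [Finset.sum_ite_eq (Finset.univ) (σ i) (fun t => Wmat m w t * v i)]
      simp [hA, Wmat]
    have hWinj : Function.Injective (Wmat m).mulVec :=
      Matrix.mulVec_injective_iff_isUnit.mpr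
        ((Matrix.isUnit_iff_isUnit_det _).mpr (isUnit_iff_ne_zero.mpr (Wmat_det_ne m)))
    have hvt0 : vt = 0 := by
      apply hWinj
      rw [hWv, hu0, Matrix.mulVec_zero]
    funext i
    have : vt (σ i) = 0 := by rw [hvt0]; rfl
    rw [hvt] at this
    simp only [hσinj.eq_iff] at this
    rwa [Finset.sum_ite_eq' (Finset.univ) i (fun i' => v i'), if_pos (Finset.mem_univ i)] at this
  have hGinj : Function.Injective G.mulVec := by
    intro x y hxy
    have : G.mulVec (x - y) = 0 := by
      rw [Matrix.mulVec_sub, hxy, sub_self]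
    have := hker _ this
    exact sub_eq_zero.mp this
  have hGunit : IsUnit G := Matrix.mulVec_injective_iff_isUnit.mp hGinj
  refine ⟨hGunit, fun y => ?_⟩
  have hdet : IsUnit G.det := (Matrix.isUnit_iff_isUnit_det G).mp hGunit
  refine ⟨G⁻¹.mulVec y, ?_, fun η hη => ?_⟩
  · show G.mulVec (G⁻¹.mulVec y) = y
    rw [Matrix.mulVec_mulVec, Matrix.mul_nonsing_inv G hdet, Matrix.one_mulVec]
  · apply hGinj
    rw [hη, Matrix.mulVec_mulVec, Matrix.mul_nonsing_inv G hdet, Matrix.one_mulVec]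
end
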